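/- For every integer n ≥ 2, every real F > 0, every real a > 1 with a^(2^(-n)) > n·F, and every deterministic algorithm (φ, g) for weighted minimum asymmetric binary string guessing with known history reading at most b ≤ n−1 bits of advice, there exists a string x ∈ {0,1}^n containing at least one 1 such that the output y produced by the algorithm on x with the adversary weights w_1,…,w_n is either infeasible or has cost Σ_{i: y_i=1} w_i > F · OPT(x), where OPT(x) = Σ_{i: x_i=1} w_i. -/

import Mathlib

/-- The adversary weights (0-indexed): `advW a x 0 = a^(1/2)` is the weight `w_1`, and the
weight `w_{j+2} = advW a x (j+1)` equals `w_{j+1} · a^(2^{-(j+2)})` if `x_{j+1} = 1`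
(i.e. `x j = true` 0-indexed) and `w_{j+1} · a^(-2^{-(j+2)})` otherwise. -/
noncomputable def advW (a : ℝ) (x : ℕ → Bool) : ℕ → ℝ
  | 0 => a ^ ((2:ℝ)⁻¹)
  | j + 1 => advW a x j * a ^ (if x j then ((2:ℝ) ^ (j + 2))⁻¹ else -((2:ℝ) ^ (j + 2))⁻¹)

/-- Extension of a string `x ∈ {0,1}^n` to an infinite string (by zeros). -/
def extStr {n : ℕ} (x : Fin n → Bool) : ℕ → Bool :=
  fun k => if h : k < n then x ⟨k, h⟩ else false

noncomputable def advE (x : ℕ → Bool) : ℕ → ℝ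
  | 0 => (2:ℝ)⁻¹
  | j + 1 => advE x j + (if x j then ((2:ℝ) ^ (j + 2))⁻¹ else -((2:ℝ) ^ (j + 2))⁻¹)

lemma advW_eq_rpow (a : ℝ) (ha : 0 < a) (x : ℕ → Bool) : ∀ j, advW a x j = a ^ advE x j
  | 0 => rfl
  | j+1 => by
    rw [advW, advE, advW_eq_rpow a ha x j, Real.rpow_add ha]

lemma advE_succ_le (x : ℕ → Bool) (j : ℕ) :
    advE x (j+1) ≤ advE x j + ((2:ℝ) ^ (j + 2))⁻¹ := by
  have h : (0:ℝ) < ((2:ℝ) ^ (j + 2))⁻¹ := by positivity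
  rw [advE]; split <;> linarith

lemma advE_le_succ (x : ℕ → Bool) (j : ℕ) :
    advE x j - ((2:ℝ) ^ (j + 2))⁻¹ ≤ advE x (j+1) := by
  have h : (0:ℝ) < ((2:ℝ) ^ (j + 2))⁻¹ := by positivity
  rw [advE]; split <;> linarith

lemma half_pow (m : ℕ) : ((2:ℝ) ^ (m+1))⁻¹ = 2 * ((2:ℝ) ^ (m+2))⁻¹ := by
  rw [pow_succ (2:ℝ) (m+1)]
  field_simp

lemma advE_lower (x : ℕ → Bool) (j m : ℕ) (h : j < m) (hx : x j = true) :
    advE x j + ((2:ℝ) ^ (m + 1))⁻¹ ≤ advE x m := by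
  induction m, h using Nat.le_induction with
  | base =>
    have h0 : advE x (j+1) = advE x j + ((2:ℝ) ^ (j + 2))⁻¹ := by
      rw [advE, hx]; simp
    show advE x j + ((2:ℝ) ^ (j + 2))⁻¹ ≤ advE x (j+1)
    rw [h0]
  | succ m hm ih =>
    have h1 := advE_le_succ x m
    have h2 := half_pow m
    have : (m + 1) + 1 = m + 2 := rfl
    rw [this]
    linarith

lemma advE_upper (x : ℕ → Bool) (j m : ℕ) (h : j < m) (hx : x j = false) :
    advE x m ≤ advE x j - ((2:ℝ) ^ (m + 1))⁻¹ := by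
  induction m, h using Nat.le_induction with
  | base =>
    have h0 : advE x (j+1) = advE x j + -((2:ℝ) ^ (j + 2))⁻¹ := by
      rw [advE, hx]; simp
    show advE x (j+1) ≤ advE x j - ((2:ℝ) ^ (j + 2))⁻¹
    rw [h0]; ring_nf; exact le_refl _
  | succ m hm ih =>
    have h1 := advE_succ_le x m
    have h2 := half_pow m
    have : (m + 1) + 1 = m + 2 := rfl
    rw [this]
    linarith

lemma advE_key (y : ℕ → Bool) (n i m : ℕ) (hi : i < n) (hm : m < n)
    (hyi : y i = false) (hym : y m = true) :
    advE y m + ((2:ℝ) ^ n)⁻¹ ≤ advE y i := by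
  rcases lt_trichotomy i m with h | h | h
  · have h1 := advE_upper y i m h hyi
    have hmono : ((2:ℝ) ^ n)⁻¹ ≤ ((2:ℝ) ^ (m+1))⁻¹ := by
      gcongr
      · norm_num
      · omega
    linarith
  · subst h; rw [hyi] at hym; simp at hym
  · have h1 := advE_lower y m i h hym
    have hmono : ((2:ℝ) ^ n)⁻¹ ≤ ((2:ℝ) ^ (i+1))⁻¹ := by
      gcongr
      · norm_num
      · omega
    linarith

lemma advW_key (a : ℝ) (ha : 1 < a) (y : ℕ → Bool) (n i m : ℕ) (hi : i < n) (hm : m < n)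
    (hyi : y i = false) (hym : y m = true) :
    advW a y m * a ^ (((2:ℝ) ^ n)⁻¹) ≤ advW a y i := by
  have ha0 : (0:ℝ) < a := lt_trans one_pos ha
  rw [advW_eq_rpow a ha0, advW_eq_rpow a ha0, ← Real.rpow_add ha0]
  exact Real.rpow_le_rpow_of_exponent_le ha.le (advE_key y n i m hi hm hyi hym)

def trace (g : List Bool → Bool) : ℕ → List Bool
  | 0 => []
  | k + 1 => trace g k ++ [g (trace g k)]

lemma take_eq_trace {n : ℕ} (x : Fin n → Bool) (g : List Bool → Bool)
    (hg : ∀ i : Fin n, g ((List.ofFn x).take i.val) = x i) :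
    ∀ k, k ≤ n → (List.ofFn x).take k = trace g k
  | 0, _ => by simp [trace]
  | k+1, hk => by
    have hk' : k < n := hk
    have ih := take_eq_trace x g hg k hk'.le
    rw [trace, ← ih, List.take_succ]
    congr 1
    have hget : (List.ofFn x)[k]? = some (x ⟨k, hk'⟩) := by
      rw [List.getElem?_eq_getElem (by simp [hk'])]
      simp
    rw [hget]
    simp [hg ⟨k, hk'⟩]

/-- For weighted minimum asymmetric binary string guessing with known history:
for every `n ≥ 2`, `F > 0`, `a > 1` with `a^(2^{-n}) > n·F`, and every deterministic
algorithm `(φ, g)` reading at most `b ≤ n - 1` advice bits, there is an input string `x`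
containing a `1` on which the output `y`, given by
`y_i = g (φ x) (x_1 … x_{i-1})`, is either infeasible (some `i` has `x_i = 1` but `y_i = 0`)
or has cost `Σ_{i : y_i = 1} w_i > F · OPT(x)`, where `OPT(x) = Σ_{i : x_i = 1} w_i` and
`w_1, …, w_n` are the adversary weights determined by `a` and `x`. -/
theorem weighted_minASGk_advice_lower_bound
    (n : ℕ) (hn : 2 ≤ n) (F a : ℝ) (hF : 0 < F) (ha : 1 < a)
    (haF : (n : ℝ) * F < a ^ (((2:ℝ) ^ n)⁻¹))
    (b : ℕ) (hb : b ≤ n - 1)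
    (φ : (Fin n → Bool) → Fin (2 ^ b))
    (g : Fin (2 ^ b) → List Bool → Bool) :
    ∃ x : Fin n → Bool, (∃ i, x i = true) ∧
      ((∃ i : Fin n, x i = true ∧ g (φ x) ((List.ofFn x).take i.val) = false) ∨
        F * ∑ i : Fin n, (if x i then advW a (extStr x) i.val else 0) <
          ∑ i : Fin n, (if g (φ x) ((List.ofFn x).take i.val) then advW a (extStr x) i.val else 0)) := by
  classical
  have ha0 : (0:ℝ) < a := lt_trans one_pos ha
  set z : Fin (2^b) → (Fin n → Bool) := fun c i => g c (trace (g c) i.val) with hz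
  obtain ⟨x, hx1, hx2⟩ : ∃ x : Fin n → Bool, (∃ i, x i = true) ∧ ∀ c, x ≠ z c := by
    by_contra hcon
    push_neg at hcon
    have hsub : (Finset.univ : Finset (Fin n → Bool)) ⊆
        insert (fun _ => false) (Finset.univ.image z) := by
      intro x _
      by_cases hone : ∃ i, x i = true
      · obtain ⟨c, hc⟩ := hcon x hone
        exact Finset.mem_insert_of_mem (Finset.mem_image.mpr ⟨c, Finset.mem_univ c, hc.symm⟩)
      · push_neg at hone
        have hxf : x = fun _ => false := funext fun i => by simpa using hone i
        simp [hxf]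
    have h1 := Finset.card_le_card hsub
    have h2 : (Finset.univ.image z).card ≤ 2^b :=
      le_trans Finset.card_image_le (by simp)
    have h3 : (insert (fun _ => false) (Finset.univ.image z)).card ≤ 2^b + 1 :=
      le_trans (Finset.card_insert_le _ _) (by omega)
    have h4 : (Finset.univ : Finset (Fin n → Bool)).card = 2^n := by simp
    have h5 : 2^b ≤ 2^(n-1) := Nat.pow_le_pow_right (by norm_num) hb
    have h6 : 2^(n-1) + 2^(n-1) = 2^n := by
      rw [← two_mul, ← pow_succ']
      congr 1
      omega
    have h7 : 2 ≤ 2^(n-1) := by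
      calc 2 = 2^1 := rfl
        _ ≤ 2^(n-1) := Nat.pow_le_pow_right (by norm_num) (by omega)
    omega
  refine ⟨x, hx1, ?_⟩
  have hmis : ∃ i : Fin n, g (φ x) ((List.ofFn x).take i.val) ≠ x i := by
    by_contra hcon
    push_neg at hcon
    apply hx2 (φ x)
    funext i
    have ht := take_eq_trace x (g (φ x)) hcon i.val i.isLt.le
    have := hcon i
    rw [ht] at this
    exact this.symm
  obtain ⟨i, hi⟩ := hmis
  cases hxi : x i with
  | true =>
    left
    refine ⟨i, hxi, ?_⟩
    rw [hxi] at hi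
    simpa using hi
  | false =>
    right
    have hgi : g (φ x) ((List.ofFn x).take i.val) = true := by
      rw [hxi] at hi
      simpa using hi
    set y := extStr x with hy
    set A := a ^ (((2:ℝ)^n)⁻¹) with hA
    have hApos : 0 < A := Real.rpow_pos_of_pos ha0 _
    have hwpos : ∀ m : Fin n, 0 < advW a y m.val := fun m => by
      rw [advW_eq_rpow a ha0]
      exact Real.rpow_pos_of_pos ha0 _
    have hyext : ∀ m : Fin n, y m.val = x m := fun m => by
      simp [hy, extStr]
    have hkey : ∀ m : Fin n, x m = true → advW a y m.val * A ≤ advW a y i.val := by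
      intro m hm
      exact advW_key a ha y n i.val m.val i.isLt m.isLt
        (by rw [hyext i, hxi]) (by rw [hyext m, hm])
    have hOPT : (∑ m : Fin n, if x m then advW a y m.val else 0) * A
        ≤ (n : ℝ) * advW a y i.val := by
      rw [Finset.sum_mul]
      calc ∑ m : Fin n, (if x m then advW a y m.val else 0) * A
          ≤ ∑ _m : Fin n, advW a y i.val := by
            apply Finset.sum_le_sum
            intro m _
            by_cases hm : x m = true
            · rw [if_pos hm]; exact hkey m hm
            · rw [if_neg hm, zero_mul]; exact (hwpos i).le
        _ = (n : ℝ) * advW a y i.val := by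
            rw [Finset.sum_const]; simp [mul_comm]
    have hcost : advW a y i.val ≤
        ∑ m : Fin n, if g (φ x) ((List.ofFn x).take m.val) then advW a y m.val else 0 := by
      have hs := Finset.single_le_sum
        (f := fun m : Fin n => if g (φ x) ((List.ofFn x).take m.val) then advW a y m.val else 0)
        (fun m _ => by split <;> [exact (hwpos m).le; exact le_refl 0])
        (Finset.mem_univ i)
      rwa [if_pos hgi] at hs
    have hOPTnn : 0 ≤ ∑ m : Fin n, (if x m then advW a y m.val else 0) := by
      apply Finset.sum_nonneg
      intro m _
      split <;> [exact (hwpos m).le; exact le_refl 0]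
    set W := advW a y i.val with hW
    set O := ∑ m : Fin n, (if x m then advW a y m.val else 0) with hO
    have h1 : F * (O * A) ≤ F * ((n:ℝ) * W) := mul_le_mul_of_nonneg_left hOPT hF.le
    have h2 : ((n:ℝ) * F) * W < A * W := mul_lt_mul_of_pos_right haF (hwpos i)
    have h3 : F * O * A < A * W := by nlinarith
    have h4 : F * O < W := by
      have := lt_of_mul_lt_mul_right (by linarith : F * O * A < W * A) hApos.le
      linarith
    linarith
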